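/- Let P > 0 and let λ, k, γ, ν, Ĉ, D̂ be real numbers. Suppose u : ℝ → ℝ is twice continuously differentiable, periodic with period 2P, and satisfies for all θ ∈ ℝ both λk²u''(θ) = (γ/3)u(θ)³ − (ν/2)u(θ)² + Ĉ and (λk²/2)u'(θ)² = (γ/12)u(θ)⁴ − (ν/6)u(θ)³ + Ĉu(θ) + D̂. Then 18λk²⟨(u')²⟩ = −ν⟨u³⟩ + 18Ĉ⟨u⟩ + 24D̂, where ⟨f⟩ = (1/(2P))∫₀^{2P} f(θ)dθ. -/

import Mathlib

/-- `18λk²⟨(u')²⟩ = -ν⟨u³⟩ + 18Ĉ⟨u⟩ + 24D̂` for a 2P-periodic solution of the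
once-integrated steady Gardner equation and its first integral. -/
theorem mean_identity_uprime_sq
    (P lam k γ ν C D : ℝ) (hP : 0 < P)
    (u : ℝ → ℝ) (hu : ContDiff ℝ 2 u)
    (hper : Function.Periodic u (2 * P))
    (heq1 : ∀ θ : ℝ, lam * k ^ 2 * iteratedDeriv 2 u θ
      = (γ / 3) * (u θ) ^ 3 - (ν / 2) * (u θ) ^ 2 + C)
    (heq2 : ∀ θ : ℝ, (lam * k ^ 2 / 2) * (deriv u θ) ^ 2
      = (γ / 12) * (u θ) ^ 4 - (ν / 6) * (u θ) ^ 3 + C * u θ + D) :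
    18 * lam * k ^ 2 * ((1 / (2 * P)) * ∫ θ in (0:ℝ)..(2 * P), (deriv u θ) ^ 2)
      = -ν * ((1 / (2 * P)) * ∫ θ in (0:ℝ)..(2 * P), (u θ) ^ 3)
        + 18 * C * ((1 / (2 * P)) * ∫ θ in (0:ℝ)..(2 * P), u θ)
        + 24 * D := by
  have hdu : Differentiable ℝ u := hu.differentiable (by norm_num)
  have hcd1 : ContDiff ℝ 1 (deriv u) := (contDiff_succ_iff_deriv.mp (by exact_mod_cast hu)).2.2
  have hdd : Differentiable ℝ (deriv u) := hcd1.differentiable (by norm_num)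
  have cu : Continuous u := hu.continuous
  have cu1 : Continuous (deriv u) := hcd1.continuous
  have cu2 : Continuous (deriv (deriv u)) := by
    have := hu.continuous_iteratedDeriv 2 (by norm_num)
    simpa [iteratedDeriv_succ, iteratedDeriv_one] using this
  -- iteratedDeriv 2 = deriv deriv
  have hit : ∀ θ, iteratedDeriv 2 u θ = deriv (deriv u) θ := by
    intro θ; rw [iteratedDeriv_succ, iteratedDeriv_one]
  -- derivative of u * u'
  have hg : ∀ θ : ℝ, HasDerivAt (fun x => u x * deriv u x)
      ((deriv u θ) ^ 2 + u θ * deriv (deriv u) θ) θ := by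
    intro θ
    have h1 := (hdu θ).hasDerivAt
    have h2 := (hdd θ).hasDerivAt
    have : HasDerivAt (fun x => u x * deriv u x)
        (deriv u θ * deriv u θ + u θ * deriv (deriv u) θ) θ := h1.mul h2
    convert this using 1; ring
  have hint : (∫ θ in (0:ℝ)..(2 * P), ((deriv u θ) ^ 2 + u θ * deriv (deriv u) θ))
      = u (2 * P) * deriv u (2 * P) - u 0 * deriv u 0 := by
    apply intervalIntegral.integral_eq_sub_of_hasDerivAt (fun x _ => hg x)
    exact ((cu1.pow 2).add (cu.mul cu2)).intervalIntegrable _ _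
  have hperd : deriv u (2 * P) = deriv u 0 := by
    have : (fun x => u (x + 2 * P)) = u := funext fun x => hper x
    symm
    calc deriv u 0 = deriv (fun x => u (x + 2 * P)) 0 := by rw [this]
      _ = deriv u (0 + 2 * P) := deriv_comp_add_const u (2 * P) 0
      _ = deriv u (2 * P) := by ring_nf
  have hbnd : u (2 * P) * deriv u (2 * P) - u 0 * deriv u 0 = 0 := by
    have hu0 : u (2 * P) = u 0 := by simpa using hper 0
    rw [hu0, hperd]; ring
  rw [hbnd] at hint
  -- split hint
  have hsplit : (∫ θ in (0:ℝ)..(2 * P), (deriv u θ) ^ 2)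
      + (∫ θ in (0:ℝ)..(2 * P), u θ * deriv (deriv u) θ) = 0 := by
    rw [← intervalIntegral.integral_add (f := fun θ => (deriv u θ) ^ 2)
      (g := fun θ => u θ * deriv (deriv u) θ) ((cu1.pow 2).intervalIntegrable _ _)
      ((cu.mul cu2).intervalIntegrable _ _)]
    exact hint
  -- integrate heq1 * u
  have hA : (∫ θ in (0:ℝ)..(2 * P), lam * k ^ 2 * (u θ * deriv (deriv u) θ))
      = ∫ θ in (0:ℝ)..(2 * P), ((γ / 3) * (u θ) ^ 4 - (ν / 2) * (u θ) ^ 3 + C * u θ) := by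
    apply intervalIntegral.integral_congr
    intro θ _
    have := heq1 θ
    rw [hit θ] at this
    have h2 : u θ * (lam * k ^ 2 * deriv (deriv u) θ)
        = u θ * ((γ / 3) * (u θ) ^ 3 - (ν / 2) * (u θ) ^ 2 + C) := by rw [this]
    calc lam * k ^ 2 * (u θ * deriv (deriv u) θ)
        = u θ * (lam * k ^ 2 * deriv (deriv u) θ) := by ring
      _ = u θ * ((γ / 3) * (u θ) ^ 3 - (ν / 2) * (u θ) ^ 2 + C) := h2
      _ = (γ / 3) * (u θ) ^ 4 - (ν / 2) * (u θ) ^ 3 + C * u θ := by ring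
  have hB : (∫ θ in (0:ℝ)..(2 * P), (lam * k ^ 2 / 2) * (deriv u θ) ^ 2)
      = ∫ θ in (0:ℝ)..(2 * P), ((γ / 12) * (u θ) ^ 4 - (ν / 6) * (u θ) ^ 3 + C * u θ + D) := by
    apply intervalIntegral.integral_congr
    intro θ _; exact heq2 θ
  -- expand linearity
  set I2 := ∫ θ in (0:ℝ)..(2 * P), (deriv u θ) ^ 2 with hI2
  set J := ∫ θ in (0:ℝ)..(2 * P), u θ * deriv (deriv u) θ with hJ
  set I1 := ∫ θ in (0:ℝ)..(2 * P), u θ with hI1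
  set I3 := ∫ θ in (0:ℝ)..(2 * P), (u θ) ^ 3 with hI3
  set I4 := ∫ θ in (0:ℝ)..(2 * P), (u θ) ^ 4 with hI4
  have i1 : IntervalIntegrable u MeasureTheory.volume 0 (2 * P) := cu.intervalIntegrable _ _
  have i3 : IntervalIntegrable (fun θ => (u θ) ^ 3) MeasureTheory.volume 0 (2 * P) :=
    (cu.pow 3).intervalIntegrable _ _
  have i4 : IntervalIntegrable (fun θ => (u θ) ^ 4) MeasureTheory.volume 0 (2 * P) :=
    (cu.pow 4).intervalIntegrable _ _
  have hA' : lam * k ^ 2 * J = (γ / 3) * I4 - (ν / 2) * I3 + C * I1 := by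
    rw [hJ, hI4, hI3, hI1, ← intervalIntegral.integral_const_mul, ← intervalIntegral.integral_const_mul,
      ← intervalIntegral.integral_const_mul, ← intervalIntegral.integral_const_mul, hA,
      ← intervalIntegral.integral_sub ((i4.const_mul _)) (i3.const_mul _),
      ← intervalIntegral.integral_add ((i4.const_mul _).sub (i3.const_mul _)) (i1.const_mul _)]
  have hB' : (lam * k ^ 2 / 2) * I2
      = (γ / 12) * I4 - (ν / 6) * I3 + C * I1 + D * (2 * P) := by
    rw [hI2, hI4, hI3, hI1, ← intervalIntegral.integral_const_mul, ← intervalIntegral.integral_const_mul,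
      ← intervalIntegral.integral_const_mul, ← intervalIntegral.integral_const_mul, hB]
    rw [← intervalIntegral.integral_sub (i4.const_mul _) (i3.const_mul _),
      ← intervalIntegral.integral_add ((i4.const_mul _).sub (i3.const_mul _)) (i1.const_mul _)]
    rw [intervalIntegral.integral_add (((i4.const_mul _).sub (i3.const_mul _)).add (i1.const_mul _))
      (intervalIntegrable_const), intervalIntegral.integral_const]
    simp [mul_comm]
  have hJI : J = -I2 := by linarith
  rw [hJI] at hA'
  have hPne : (2 * P) ≠ 0 := by positivity
  field_simp
  nlinarith [hA', hB', sq_nonneg P]
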